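/- Let ε ∈ ℂ be a primitive 5th root of unity and let G_icosa be the binary icosahedral group, i.e., the subgroup of GL(2,ℂ) generated by the matrices S = [[ε³, 0], [0, ε²]], T = (1/(ε² − ε³))·[[ε + ε⁴, 1], [1, −(ε + ε⁴)]], and U = [[0, 1], [−1, 0]]. Let V_d denote the homogeneous degree-d component of ℂ[x₁,x₂], with GL(2,ℂ) acting by linear substitution of variables. For each k ∈ {2, 3, 4, 5}, every ℂ-linear map φ : V_{2k−1} → V₁ that is G_icosa-equivariant (i.e., φ(g·f) = g·φ(f) for all g ∈ G_icosa and f ∈ V_{2k−1}) is the zero map. -/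

import Mathlib

open Matrix MvPolynomial

noncomputable section

/-- The substitution action `f ↦ f(Ax)` of a matrix on polynomials in two variables. -/
def substMap (A : Matrix (Fin 2) (Fin 2) ℂ) :
    MvPolynomial (Fin 2) ℂ →ₗ[ℂ] MvPolynomial (Fin 2) ℂ :=
  (MvPolynomial.aeval fun i => ∑ j, A i j • (X j : MvPolynomial (Fin 2) ℂ)).toLinearMap

/-- `Vd d` is the homogeneous degree-`d` component of `ℂ[x₁,x₂]`. -/
def Vd (d : ℕ) : Submodule ℂ (MvPolynomial (Fin 2) ℂ) :=
  homogeneousSubmodule (Fin 2) ℂ d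

lemma substMap_mem (A : Matrix (Fin 2) (Fin 2) ℂ) {d : ℕ} {f : MvPolynomial (Fin 2) ℂ}
    (hf : f ∈ Vd d) : substMap A f ∈ Vd d := by
  have hg : ∀ i, (∑ j, A i j • (X j : MvPolynomial (Fin 2) ℂ)).IsHomogeneous 1 := by
    intro i
    apply IsHomogeneous.sum
    intro j _
    rw [smul_eq_C_mul]
    exact isHomogeneous_C_mul_X _ _
  have h := ((mem_homogeneousSubmodule _ _).1 hf).aeval _ hg
  rw [one_mul] at h
  exact (mem_homogeneousSubmodule _ _).2 h

/-- The action of a matrix on the degree-`d` homogeneous component, by `f ↦ f(Ax)`. -/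
def actV (A : Matrix (Fin 2) (Fin 2) ℂ) (d : ℕ) : Vd d →ₗ[ℂ] Vd d :=
  LinearMap.codRestrict (Vd d) ((substMap A).comp (Vd d).subtype)
    fun f => substMap_mem A f.2

-- auxiliary development
lemma icosaAux.sum_fin2 (m : Fin 2 →₀ ℕ) : (∑ i ∈ m.support, m i) = m 0 + m 1 := by
  rw [Finset.sum_subset (Finset.subset_univ m.support)
    (fun i _ hi => Finsupp.notMem_support_iff.1 hi), Fin.sum_univ_two]

lemma icosaAux.degree_fin2 (m : Fin 2 →₀ ℕ) : (Finsupp.weight 1) m = m 0 + m 1 := by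
  rw [show (Finsupp.weight 1 : (Fin 2 →₀ ℕ) →+ ℕ) = Finsupp.weight (fun _ => 1) from rfl,
    ← Finsupp.degree_eq_weight_one]
  exact icosaAux.sum_fin2 m

lemma icosaAux.fin2_eq (m : Fin 2 →₀ ℕ) : m = Finsupp.single 0 (m 0) + Finsupp.single 1 (m 1) := by
  ext i; fin_cases i <;> simp

lemma icosaAux.mon_mem (a b : ℕ) : (X 0:MvPolynomial (Fin 2) ℂ)^a * (X 1)^b ∈ Vd (a+b) := by
  rw [Vd, mem_homogeneousSubmodule]
  simpa using (isHomogeneous_X_pow (R := ℂ) (0:Fin 2) a).mul (isHomogeneous_X_pow (R := ℂ) (1:Fin 2) b)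

def monV (d a b : ℕ) (hab : a + b = d) : Vd d := ⟨X 0 ^ a * X 1 ^ b, hab ▸ icosaAux.mon_mem a b⟩

lemma monV_coe (d a b : ℕ) (hab : a + b = d) :
    ((monV d a b hab : Vd d) : MvPolynomial (Fin 2) ℂ) = X 0 ^ a * X 1 ^ b := rfl

lemma actV_coe (A : Matrix (Fin 2) (Fin 2) ℂ) (d : ℕ) (v : Vd d) :
    ((actV A d v : Vd d) : MvPolynomial (Fin 2) ℂ) = substMap A (v : MvPolynomial (Fin 2) ℂ) := rfl

lemma subst_mon (A : Matrix (Fin 2) (Fin 2) ℂ) (a b : ℕ) :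
    substMap A (X 0^a * X 1^b) =
      (C (A 0 0) * X 0 + C (A 0 1) * X 1)^a * (C (A 1 0) * X 0 + C (A 1 1) * X 1)^b := by
  simp [substMap, Fin.sum_univ_two, smul_eq_C_mul, map_pow]

lemma subst_lin (A : Matrix (Fin 2) (Fin 2) ℂ) (p q : ℂ) :
    substMap A (C p * X 0 + C q * X 1) =
      C (p * A 0 0 + q * A 1 0) * X 0 + C (p * A 0 1 + q * A 1 1) * X 1 := by
  simp only [substMap, AlgHom.toLinearMap_apply, map_add, _root_.map_mul, aeval_C, aeval_X,
    Fin.sum_univ_two, smul_eq_C_mul, algebraMap_eq, _root_.map_add]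
  ring

lemma subst_diag (x y p q : ℂ) :
    substMap !![x, 0; 0, y] (C p * X 0 + C q * X 1) = C (p * x) * X 0 + C (q * y) * X 1 := by
  rw [subst_lin]
  norm_num

lemma subst_anti (x y p q : ℂ) :
    substMap !![0, x; y, 0] (C p * X 0 + C q * X 1) = C (q * y) * X 0 + C (p * x) * X 1 := by
  rw [subst_lin]
  norm_num

lemma rep1 (v : Vd 1) : (v : MvPolynomial (Fin 2) ℂ) =
    C (coeff (Finsupp.single 0 1) (v : MvPolynomial (Fin 2) ℂ)) * X 0 +
    C (coeff (Finsupp.single 1 1) (v : MvPolynomial (Fin 2) ℂ)) * X 1 := by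
  have hv : (v : MvPolynomial (Fin 2) ℂ).IsHomogeneous 1 := v.2
  ext m
  rw [coeff_add, coeff_C_mul, coeff_C_mul, coeff_X', coeff_X']
  by_cases h0 : Finsupp.single (0 : Fin 2) 1 = m
  · subst h0
    have : ¬ (Finsupp.single (1 : Fin 2) 1 = Finsupp.single (0 : Fin 2) 1) := by
      intro h
      simpa using DFunLike.congr_fun h 0
    simp [this]
  · by_cases h1 : Finsupp.single (1 : Fin 2) 1 = m
    · subst h1; simp [h0]
    · simp only [h0, h1, if_false, mul_zero, add_zero]
      by_contra hc
      have hm := hv hc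
      rw [icosaAux.degree_fin2] at hm
      have hcases : (m 0 = 1 ∧ m 1 = 0) ∨ (m 0 = 0 ∧ m 1 = 1) := by omega
      rcases hcases with ⟨ha, hb⟩ | ⟨ha, hb⟩
      · apply h0
        rw [icosaAux.fin2_eq m, ha, hb]; simp
      · apply h1
        rw [icosaAux.fin2_eq m, ha, hb]; simp

lemma vd1_zero (v : Vd 1)
    (h0 : coeff (Finsupp.single 0 1) (v : MvPolynomial (Fin 2) ℂ) = 0)
    (h1 : coeff (Finsupp.single 1 1) (v : MvPolynomial (Fin 2) ℂ) = 0) : v = 0 := by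
  apply Subtype.ext
  rw [rep1 v, h0, h1]
  simp

lemma conclude {d : ℕ} (φ : Vd d →ₗ[ℂ] Vd 1)
    (h : ∀ (a b : ℕ) (hab : a + b = d), φ (monV d a b hab) = 0) : φ = 0 := by
  apply LinearMap.ext
  rintro ⟨f, hf⟩
  have hw : ∀ m ∈ f.support, m 0 + m 1 = d := by
    intro m hm
    have := ((mem_homogeneousSubmodule _ _).1 hf) (mem_support_iff.1 hm)
    rw [icosaAux.degree_fin2] at this
    exact this
  have hdecomp : (⟨f, hf⟩ : Vd d) =
      ∑ m ∈ f.support.attach, coeff m.1 f • monV d (m.1 0) (m.1 1) (hw m.1 m.2) := by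
    apply Subtype.ext
    rw [Submodule.coe_sum]
    simp only [SetLike.val_smul, monV_coe, smul_eq_C_mul]
    rw [Finset.sum_attach f.support (fun m => C (coeff m f) * (X 0 ^ (m 0) * X 1 ^ (m 1)))]
    conv_lhs => rw [f.as_sum]
    apply Finset.sum_congr rfl
    intro m _
    rw [monomial_eq, Finsupp.prod_fintype _ _ (fun i => pow_zero _), Fin.prod_univ_two]
  rw [hdecomp, map_sum]
  simp [h]

lemma coeff0_lin (p q : ℂ) :
    coeff (Finsupp.single 0 1) (C p * X 0 + C q * X 1 : MvPolynomial (Fin 2) ℂ) = p := by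
  simp [coeff_X', Finsupp.single_eq_single_iff]

lemma coeff1_lin (p q : ℂ) :
    coeff (Finsupp.single 1 1) (C p * X 0 + C q * X 1 : MvPolynomial (Fin 2) ℂ) = q := by
  simp [coeff_X', Finsupp.single_eq_single_iff]

lemma S_step (ε : ℂ) (hε : IsPrimitiveRoot ε 5) (M : Matrix (Fin 2) (Fin 2) ℂ)
    (hM : M = !![ε^3, 0; 0, ε^2]) {d : ℕ} (φ : Vd d →ₗ[ℂ] Vd 1)
    (hφ : ∀ f, φ (actV M d f) = actV M 1 (φ f)) (a b : ℕ) (hab : a + b = d) :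
    ((3*a+2*b) % 5 ≠ 3 → coeff (Finsupp.single 0 1)
        ((φ (monV d a b hab) : Vd 1) : MvPolynomial (Fin 2) ℂ) = 0) ∧
    ((3*a+2*b) % 5 ≠ 2 → coeff (Finsupp.single 1 1)
        ((φ (monV d a b hab) : Vd 1) : MvPolynomial (Fin 2) ℂ) = 0) := by
  have hε5 : ε^5 = 1 := hε.pow_eq_one
  have hact : actV M d (monV d a b hab) = (ε^(3*a+2*b)) • monV d a b hab := by
    apply Subtype.ext
    rw [actV_coe, monV_coe, subst_mon, hM]
    rw [SetLike.val_smul, monV_coe, smul_eq_C_mul]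
    simp only [Matrix.cons_val', Matrix.cons_val_zero, Matrix.cons_val_one, Matrix.head_cons,
      Matrix.empty_val', Matrix.cons_val_fin_one, Matrix.head_fin_const, Matrix.of_apply,
      map_zero, zero_mul, mul_zero, add_zero, zero_add]
    rw [mul_pow, mul_pow, ← C_pow, ← C_pow, ← pow_mul, ← pow_mul, pow_add, _root_.map_mul]
    ring
  have h := hφ (monV d a b hab)
  rw [hact, LinearMap.map_smul] at h
  have hval := rep1 (φ (monV d a b hab))
  set c := coeff (Finsupp.single 0 1) ((φ (monV d a b hab) : Vd 1) : MvPolynomial (Fin 2) ℂ) with hc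
  set e := coeff (Finsupp.single 1 1) ((φ (monV d a b hab) : Vd 1) : MvPolynomial (Fin 2) ℂ) with he
  have hco := congrArg (fun v : Vd 1 => ((v : Vd 1) : MvPolynomial (Fin 2) ℂ)) h
  simp only [SetLike.val_smul] at hco
  rw [actV_coe, hval, hM, subst_diag] at hco
  have h0 : ε^(3*a+2*b) * c = c * ε^3 := by
    have := congrArg (coeff (Finsupp.single 0 1)) hco
    simpa only [coeff_smul, coeff0_lin, smul_eq_mul] using this
  have h1 : ε^(3*a+2*b) * e = e * ε^2 := by
    have := congrArg (coeff (Finsupp.single 1 1)) hco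
    simpa only [coeff_smul, coeff1_lin, smul_eq_mul] using this
  constructor
  · intro hne
    by_contra hcne
    have hpow : ε^(3*a+2*b) = ε^3 := by
      apply mul_right_cancel₀ hcne
      linear_combination h0
    rw [pow_eq_pow_mod (3*a+2*b) hε5] at hpow
    exact hne (hε.pow_inj (Nat.mod_lt _ (by norm_num)) (by norm_num) hpow)
  · intro hne
    by_contra hcne
    have hpow : ε^(3*a+2*b) = ε^2 := by
      apply mul_right_cancel₀ hcne
      linear_combination h1
    rw [pow_eq_pow_mod (3*a+2*b) hε5] at hpow
    exact hne (hε.pow_inj (Nat.mod_lt _ (by norm_num)) (by norm_num) hpow)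

lemma U_step (M : Matrix (Fin 2) (Fin 2) ℂ) (hM : M = !![0, 1; -1, 0]) {d : ℕ}
    (φ : Vd d →ₗ[ℂ] Vd 1) (hφ : ∀ f, φ (actV M d f) = actV M 1 (φ f))
    (a b : ℕ) (hab : a + b = d) (hba : b + a = d) :
    ((-1:ℂ))^b * coeff (Finsupp.single 0 1)
        ((φ (monV d b a hba) : Vd 1) : MvPolynomial (Fin 2) ℂ) =
      - coeff (Finsupp.single 1 1) ((φ (monV d a b hab) : Vd 1) : MvPolynomial (Fin 2) ℂ) ∧
    ((-1:ℂ))^b * coeff (Finsupp.single 1 1)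
        ((φ (monV d b a hba) : Vd 1) : MvPolynomial (Fin 2) ℂ) =
      coeff (Finsupp.single 0 1) ((φ (monV d a b hab) : Vd 1) : MvPolynomial (Fin 2) ℂ) := by
  have hact : actV M d (monV d a b hab) = ((-1:ℂ)^b) • monV d b a hba := by
    apply Subtype.ext
    rw [actV_coe, monV_coe, subst_mon, hM, SetLike.val_smul, monV_coe, smul_eq_C_mul]
    simp only [Matrix.cons_val', Matrix.cons_val_zero, Matrix.cons_val_one, Matrix.head_cons,
      Matrix.empty_val', Matrix.cons_val_fin_one, Matrix.head_fin_const, Matrix.of_apply,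
      map_zero, zero_mul, mul_zero, add_zero, zero_add, C_1, one_mul, map_neg, neg_mul,
      map_pow]
    rw [neg_pow]
    ring_nf
  have h := hφ (monV d a b hab)
  rw [hact, LinearMap.map_smul] at h
  have hvalab := rep1 (φ (monV d a b hab))
  have hvalba := rep1 (φ (monV d b a hba))
  have hco := congrArg (fun v : Vd 1 => ((v : Vd 1) : MvPolynomial (Fin 2) ℂ)) h
  simp only [SetLike.val_smul] at hco
  rw [hvalba, actV_coe, hvalab, hM, subst_anti] at hco
  constructor
  · have := congrArg (coeff (Finsupp.single 0 1)) hco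
    simp only [coeff_smul, coeff0_lin, smul_eq_mul] at this
    rw [this]
    ring
  · have := congrArg (coeff (Finsupp.single 1 1)) hco
    simp only [coeff_smul, coeff1_lin, smul_eq_mul] at this
    rw [this]
    ring

lemma clear_inv (x xi : ℂ) (hinv : x * xi = 1) (n : ℕ) (M N : ℂ)
    (h : xi^(n+1) * M = xi * N) : M = x^n * N := by
  calc M = (x*xi)^(n+1) * M := by rw [hinv, one_pow, one_mul]
  _ = x^(n+1) * (xi^(n+1) * M) := by rw [mul_pow]; ring
  _ = x^(n+1) * (xi * N) := by rw [h]
  _ = x^n * ((x*xi) * N) := by ring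
  _ = x^n * N := by rw [hinv, one_mul]

lemma coeff0X0 (p : ℂ) : coeff (Finsupp.single 0 1) (C p * X 0 : MvPolynomial (Fin 2) ℂ) = p := by
  simpa using coeff0_lin p 0
lemma coeff0X1 (p : ℂ) : coeff (Finsupp.single 0 1) (C p * X 1 : MvPolynomial (Fin 2) ℂ) = 0 := by
  simpa using coeff0_lin 0 p
lemma coeff1X0 (p : ℂ) : coeff (Finsupp.single 1 1) (C p * X 0 : MvPolynomial (Fin 2) ℂ) = 0 := by
  simpa using coeff1_lin p 0
lemma coeff1X1 (p : ℂ) : coeff (Finsupp.single 1 1) (C p * X 1 : MvPolynomial (Fin 2) ℂ) = p := by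
  simpa using coeff1_lin 0 p


set_option maxHeartbeats 4000000 in
lemma case3 (ε : ℂ) (hε : IsPrimitiveRoot ε 5)
    (hΦ : ε^4 + ε^3 + ε^2 + ε + 1 = 0)
    (hinv : (ε^2 - ε^3) * (ε^2 - ε^3)⁻¹ = 1)
    (S T U : GL (Fin 2) ℂ)
    (hS : (S : Matrix (Fin 2) (Fin 2) ℂ) = !![ε ^ 3, 0; 0, ε ^ 2])
    (hT : (T : Matrix (Fin 2) (Fin 2) ℂ) =
      (ε ^ 2 - ε ^ 3)⁻¹ • !![ε + ε ^ 4, 1; 1, -(ε + ε ^ 4)])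
    (hU : (U : Matrix (Fin 2) (Fin 2) ℂ) = !![0, 1; -1, 0])
    (φ : Vd 3 →ₗ[ℂ] Vd 1)
    (hφS : ∀ f, φ (actV (↑S) 3 f) = actV (↑S) 1 (φ f))
    (hφT : ∀ f, φ (actV (↑T) 3 f) = actV (↑T) 1 (φ f))
    (hφU : ∀ f, φ (actV (↑U) 3 f) = actV (↑U) 1 (φ f)) :
    φ = 0 := by
  have p0_3 : (0:ℕ) + 3 = 3 := by norm_num
  have p1_2 : (1:ℕ) + 2 = 3 := by norm_num
  have p2_1 : (2:ℕ) + 1 = 3 := by norm_num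
  have p3_0 : (3:ℕ) + 0 = 3 := by norm_num
  have hS0 := S_step ε hε (↑S) hS φ hφS 0 3 p0_3
  have hS1 := S_step ε hε (↑S) hS φ hφS 1 2 p1_2
  have hS2 := S_step ε hε (↑S) hS φ hφS 2 1 p2_1
  have hS3 := S_step ε hε (↑S) hS φ hφS 3 0 p3_0
  have hz0 : φ (monV 3 0 3 p0_3) = 0 := vd1_zero _ (hS0.1 (by norm_num)) (hS0.2 (by norm_num))
  have hz3 : φ (monV 3 3 0 p3_0) = 0 := vd1_zero _ (hS3.1 (by norm_num)) (hS3.2 (by norm_num))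
  have he2 : coeff (Finsupp.single 1 1) ((φ (monV 3 2 1 p2_1) : Vd 1) : MvPolynomial (Fin 2) ℂ) = 0 := hS2.2 (by norm_num)
  have hval2 := rep1 (φ (monV 3 2 1 p2_1))
  rw [he2] at hval2
  have hcz1 : coeff (Finsupp.single 0 1) ((φ (monV 3 1 2 p1_2) : Vd 1) : MvPolynomial (Fin 2) ℂ) = 0 := hS1.1 (by norm_num)
  have hval1 := rep1 (φ (monV 3 1 2 p1_2))
  rw [hcz1] at hval1
  have hU2 := (U_step (↑U) hU φ hφU 2 1 p2_1 p1_2).2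
  have hactT2 : actV (↑T) 3 (monV 3 2 1 p2_1) = ((ε^2-ε^3)⁻¹)^3 •
      ((((-1)*ε + (-1)*ε^4 : ℂ)) • monV 3 0 3 p0_3 + (((1) + (-2)*ε^2 + (-4)*ε^5 + (-2)*ε^8 : ℂ)) • monV 3 1 2 p1_2 + (((2)*ε + (-1)*ε^3 + (2)*ε^4 + (-3)*ε^6 + (-3)*ε^9 + (-1)*ε^12 : ℂ)) • monV 3 2 1 p2_1 + (((1)*ε^2 + (2)*ε^5 + (1)*ε^8 : ℂ)) • monV 3 3 0 p3_0) := by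
    apply Subtype.ext
    rw [actV_coe, monV_coe, subst_mon, hT]
    simp only [SetLike.val_smul, Submodule.coe_add, monV_coe, smul_eq_C_mul,
      Matrix.smul_apply, Matrix.cons_val', Matrix.cons_val_zero, Matrix.cons_val_one,
      Matrix.head_cons, Matrix.empty_val', Matrix.cons_val_fin_one, Matrix.head_fin_const,
      Matrix.of_apply, smul_eq_mul]
    simp only [_root_.map_mul, _root_.map_add, map_sub, map_pow, map_neg, _root_.map_one,
      map_ofNat]
    ring
  have hT2 := hφT (monV 3 2 1 p2_1)
  rw [hactT2, LinearMap.map_smul] at hT2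
  simp only [map_add, LinearMap.map_smul] at hT2
  rw [hz0, hz3] at hT2
  have hco2 := congrArg (fun v : Vd 1 => ((v : Vd 1) : MvPolynomial (Fin 2) ℂ)) hT2
  simp only [SetLike.val_smul, Submodule.coe_add, ZeroMemClass.coe_zero, smul_zero,
    zero_add, add_zero] at hco2
  rw [actV_coe, hval1, hval2, subst_lin, hT] at hco2
  simp only [Matrix.smul_apply, Matrix.cons_val', Matrix.cons_val_zero, Matrix.cons_val_one,
    Matrix.head_cons, Matrix.empty_val', Matrix.cons_val_fin_one, Matrix.head_fin_const,
    Matrix.of_apply, smul_eq_mul] at hco2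
  have hraw2 := congrArg (coeff (Finsupp.single 0 1)) hco2
  simp only [coeff_smul, coeff_add, coeff0X0, coeff0X1, coeff1X0, coeff1X1, smul_eq_mul] at hraw2
  have hMM2 : ((ε^2-ε^3)⁻¹)^3 * ((((2)*ε + (-1)*ε^3 + (2)*ε^4 + (-3)*ε^6 + (-3)*ε^9 + (-1)*ε^12 : ℂ)) * (coeff (Finsupp.single 0 1) ((φ (monV 3 2 1 p2_1) : Vd 1) : MvPolynomial (Fin 2) ℂ))) = (ε^2-ε^3)⁻¹ * ((ε+ε^4) * (coeff (Finsupp.single 0 1) ((φ (monV 3 2 1 p2_1) : Vd 1) : MvPolynomial (Fin 2) ℂ))) := by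
    linear_combination hraw2
  have hE2 : ((((2)*ε + (-1)*ε^3 + (2)*ε^4 + (-3)*ε^6 + (-3)*ε^9 + (-1)*ε^12 : ℂ)) * (coeff (Finsupp.single 0 1) ((φ (monV 3 2 1 p2_1) : Vd 1) : MvPolynomial (Fin 2) ℂ))) = (ε^2-ε^3)^2 * ((ε+ε^4) * (coeff (Finsupp.single 0 1) ((φ (monV 3 2 1 p2_1) : Vd 1) : MvPolynomial (Fin 2) ℂ))) :=
    clear_inv (ε^2-ε^3) ((ε^2-ε^3)⁻¹) hinv 2 _ _ hMM2
  have hc2 : coeff (Finsupp.single 0 1) ((φ (monV 3 2 1 p2_1) : Vd 1) : MvPolynomial (Fin 2) ℂ) = 0 := by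
    linear_combination (((-1)/(3))*ε^2 + ((-1)/(3))*ε^3) * hE2 + (((1) + (-1)*ε + ((2)/(3))*ε^3 + ((-1)/(3))*ε^6 + ((-1)/(3))*ε^8 + ((-1)/(3))*ε^11) * (coeff (Finsupp.single 0 1) ((φ (monV 3 2 1 p2_1) : Vd 1) : MvPolynomial (Fin 2) ℂ))) * hΦ
  have hee1 : coeff (Finsupp.single 1 1) ((φ (monV 3 1 2 p1_2) : Vd 1) : MvPolynomial (Fin 2) ℂ) = 0 := by
    linear_combination ((-1:ℂ)^1) * hU2 + ((-1:ℂ)^1) * hc2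
  apply conclude
  intro a b hab
  have ha : a ≤ 3 := by omega
  interval_cases a
  · have hb : b = 3 := by omega
    subst hb
    exact hz0
  · have hb : b = 2 := by omega
    subst hb
    exact vd1_zero _ hcz1 hee1
  · have hb : b = 1 := by omega
    subst hb
    exact vd1_zero _ hc2 he2
  · have hb : b = 0 := by omega
    subst hb
    exact hz3

set_option maxHeartbeats 4000000 in
lemma case5 (ε : ℂ) (hε : IsPrimitiveRoot ε 5)
    (hΦ : ε^4 + ε^3 + ε^2 + ε + 1 = 0)
    (hinv : (ε^2 - ε^3) * (ε^2 - ε^3)⁻¹ = 1)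
    (S T U : GL (Fin 2) ℂ)
    (hS : (S : Matrix (Fin 2) (Fin 2) ℂ) = !![ε ^ 3, 0; 0, ε ^ 2])
    (hT : (T : Matrix (Fin 2) (Fin 2) ℂ) =
      (ε ^ 2 - ε ^ 3)⁻¹ • !![ε + ε ^ 4, 1; 1, -(ε + ε ^ 4)])
    (hU : (U : Matrix (Fin 2) (Fin 2) ℂ) = !![0, 1; -1, 0])
    (φ : Vd 5 →ₗ[ℂ] Vd 1)
    (hφS : ∀ f, φ (actV (↑S) 5 f) = actV (↑S) 1 (φ f))
    (hφT : ∀ f, φ (actV (↑T) 5 f) = actV (↑T) 1 (φ f))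
    (hφU : ∀ f, φ (actV (↑U) 5 f) = actV (↑U) 1 (φ f)) :
    φ = 0 := by
  have p0_5 : (0:ℕ) + 5 = 5 := by norm_num
  have p1_4 : (1:ℕ) + 4 = 5 := by norm_num
  have p2_3 : (2:ℕ) + 3 = 5 := by norm_num
  have p3_2 : (3:ℕ) + 2 = 5 := by norm_num
  have p4_1 : (4:ℕ) + 1 = 5 := by norm_num
  have p5_0 : (5:ℕ) + 0 = 5 := by norm_num
  have hS0 := S_step ε hε (↑S) hS φ hφS 0 5 p0_5
  have hS1 := S_step ε hε (↑S) hS φ hφS 1 4 p1_4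
  have hS2 := S_step ε hε (↑S) hS φ hφS 2 3 p2_3
  have hS3 := S_step ε hε (↑S) hS φ hφS 3 2 p3_2
  have hS4 := S_step ε hε (↑S) hS φ hφS 4 1 p4_1
  have hS5 := S_step ε hε (↑S) hS φ hφS 5 0 p5_0
  have hz0 : φ (monV 5 0 5 p0_5) = 0 := vd1_zero _ (hS0.1 (by norm_num)) (hS0.2 (by norm_num))
  have hz1 : φ (monV 5 1 4 p1_4) = 0 := vd1_zero _ (hS1.1 (by norm_num)) (hS1.2 (by norm_num))
  have hz4 : φ (monV 5 4 1 p4_1) = 0 := vd1_zero _ (hS4.1 (by norm_num)) (hS4.2 (by norm_num))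
  have hz5 : φ (monV 5 5 0 p5_0) = 0 := vd1_zero _ (hS5.1 (by norm_num)) (hS5.2 (by norm_num))
  have he3 : coeff (Finsupp.single 1 1) ((φ (monV 5 3 2 p3_2) : Vd 1) : MvPolynomial (Fin 2) ℂ) = 0 := hS3.2 (by norm_num)
  have hval3 := rep1 (φ (monV 5 3 2 p3_2))
  rw [he3] at hval3
  have hcz2 : coeff (Finsupp.single 0 1) ((φ (monV 5 2 3 p2_3) : Vd 1) : MvPolynomial (Fin 2) ℂ) = 0 := hS2.1 (by norm_num)
  have hval2 := rep1 (φ (monV 5 2 3 p2_3))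
  rw [hcz2] at hval2
  have hU3 := (U_step (↑U) hU φ hφU 3 2 p3_2 p2_3).2
  have hactT3 : actV (↑T) 5 (monV 5 3 2 p3_2) = ((ε^2-ε^3)⁻¹)^5 •
      ((((1)*ε^2 + (2)*ε^5 + (1)*ε^8 : ℂ)) • monV 5 0 5 p0_5 + (((-2)*ε + (3)*ε^3 + (-2)*ε^4 + (9)*ε^6 + (9)*ε^9 + (3)*ε^12 : ℂ)) • monV 5 1 4 p1_4 + (((1) + (-6)*ε^2 + (3)*ε^4 + (-12)*ε^5 + (12)*ε^7 + (-6)*ε^8 + (18)*ε^10 + (12)*ε^13 + (3)*ε^16 : ℂ)) • monV 5 2 3 p2_3 + (((3)*ε + (-6)*ε^3 + (3)*ε^4 + (1)*ε^5 + (-18)*ε^6 + (5)*ε^8 + (-18)*ε^9 + (10)*ε^11 + (-6)*ε^12 + (10)*ε^14 + (5)*ε^17 + (1)*ε^20 : ℂ)) • monV 5 3 2 p3_2 + (((3)*ε^2 + (-2)*ε^4 + (6)*ε^5 + (-8)*ε^7 + (3)*ε^8 + (-12)*ε^10 + (-8)*ε^13 + (-2)*ε^16 : ℂ)) • monV 5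 4 1 p4_1 + (((1)*ε^3 + (3)*ε^6 + (3)*ε^9 + (1)*ε^12 : ℂ)) • monV 5 5 0 p5_0) := by
    apply Subtype.ext
    rw [actV_coe, monV_coe, subst_mon, hT]
    simp only [SetLike.val_smul, Submodule.coe_add, monV_coe, smul_eq_C_mul,
      Matrix.smul_apply, Matrix.cons_val', Matrix.cons_val_zero, Matrix.cons_val_one,
      Matrix.head_cons, Matrix.empty_val', Matrix.cons_val_fin_one, Matrix.head_fin_const,
      Matrix.of_apply, smul_eq_mul]
    simp only [_root_.map_mul, _root_.map_add, map_sub, map_pow, map_neg, _root_.map_one,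
      map_ofNat]
    ring
  have hT3 := hφT (monV 5 3 2 p3_2)
  rw [hactT3, LinearMap.map_smul] at hT3
  simp only [map_add, LinearMap.map_smul] at hT3
  rw [hz0, hz1, hz4, hz5] at hT3
  have hco3 := congrArg (fun v : Vd 1 => ((v : Vd 1) : MvPolynomial (Fin 2) ℂ)) hT3
  simp only [SetLike.val_smul, Submodule.coe_add, ZeroMemClass.coe_zero, smul_zero,
    zero_add, add_zero] at hco3
  rw [actV_coe, hval2, hval3, subst_lin, hT] at hco3
  simp only [Matrix.smul_apply, Matrix.cons_val', Matrix.cons_val_zero, Matrix.cons_val_one,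
    Matrix.head_cons, Matrix.empty_val', Matrix.cons_val_fin_one, Matrix.head_fin_const,
    Matrix.of_apply, smul_eq_mul] at hco3
  have hraw3 := congrArg (coeff (Finsupp.single 0 1)) hco3
  simp only [coeff_smul, coeff_add, coeff0X0, coeff0X1, coeff1X0, coeff1X1, smul_eq_mul] at hraw3
  have hMM3 : ((ε^2-ε^3)⁻¹)^5 * ((((3)*ε + (-6)*ε^3 + (3)*ε^4 + (1)*ε^5 + (-18)*ε^6 + (5)*ε^8 + (-18)*ε^9 + (10)*ε^11 + (-6)*ε^12 + (10)*ε^14 + (5)*ε^17 + (1)*ε^20 : ℂ)) * (coeff (Finsupp.single 0 1) ((φ (monV 5 3 2 p3_2) : Vd 1) : MvPolynomial (Fin 2) ℂ))) = (ε^2-ε^3)⁻¹ * ((ε+ε^4) * (coeff (Finsupp.single 0 1) ((φ (monV 5 3 2 p3_2) : Vd 1) : MvPolynomial (Fin 2) ℂ))) := by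
    linear_combination hraw3
  have hE3 : ((((3)*ε + (-6)*ε^3 + (3)*ε^4 + (1)*ε^5 + (-18)*ε^6 + (5)*ε^8 + (-18)*ε^9 + (10)*ε^11 + (-6)*ε^12 + (10)*ε^14 + (5)*ε^17 + (1)*ε^20 : ℂ)) * (coeff (Finsupp.single 0 1) ((φ (monV 5 3 2 p3_2) : Vd 1) : MvPolynomial (Fin 2) ℂ))) = (ε^2-ε^3)^4 * ((ε+ε^4) * (coeff (Finsupp.single 0 1) ((φ (monV 5 3 2 p3_2) : Vd 1) : MvPolynomial (Fin 2) ℂ))) :=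
    clear_inv (ε^2-ε^3) ((ε^2-ε^3)⁻¹) hinv 4 _ _ hMM3
  have hc3 : coeff (Finsupp.single 0 1) ((φ (monV 5 3 2 p3_2) : Vd 1) : MvPolynomial (Fin 2) ℂ) = 0 := by
    linear_combination (((-2)/(5)) + ((7)/(10))*ε^2 + ((7)/(10))*ε^3) * hE3 + (((1) + ((1)/(5))*ε + ((-6)/(5))*ε^2 + ((-9)/(2))*ε^3 + ((18)/(5))*ε^4 + ((13)/(2))*ε^5 + ((-19)/(2))*ε^6 + ((11)/(10))*ε^7 + ((61)/(5))*ε^8 + ((-53)/(10))*ε^9 + ((-2)/(5))*ε^10 + ((19)/(5))*ε^11 + (-1)*ε^12 + ((-3)/(2))*ε^13 + ((3)/(10))*ε^15 + ((-31)/(10))*ε^16 + ((7)/(10))*ε^17 + ((-7)/(10))*ε^19) * (coeff (Finsupp.single 0 1) ((φ (monV 5 3 2 p3_2) : Vd 1) : MvPolynomial (Fin 2) ℂ))) * hΦ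
  have hee2 : coeff (Finsupp.single 1 1) ((φ (monV 5 2 3 p2_3) : Vd 1) : MvPolynomial (Fin 2) ℂ) = 0 := by
    linear_combination ((-1:ℂ)^2) * hU3 + ((-1:ℂ)^2) * hc3
  apply conclude
  intro a b hab
  have ha : a ≤ 5 := by omega
  interval_cases a
  · have hb : b = 5 := by omega
    subst hb
    exact hz0
  · have hb : b = 4 := by omega
    subst hb
    exact hz1
  · have hb : b = 3 := by omega
    subst hb
    exact vd1_zero _ hcz2 hee2
  · have hb : b = 2 := by omega
    subst hb
    exact vd1_zero _ hc3 he3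
  · have hb : b = 1 := by omega
    subst hb
    exact hz4
  · have hb : b = 0 := by omega
    subst hb
    exact hz5

set_option maxHeartbeats 4000000 in
lemma case7 (ε : ℂ) (hε : IsPrimitiveRoot ε 5)
    (hΦ : ε^4 + ε^3 + ε^2 + ε + 1 = 0)
    (hinv : (ε^2 - ε^3) * (ε^2 - ε^3)⁻¹ = 1)
    (S T U : GL (Fin 2) ℂ)
    (hS : (S : Matrix (Fin 2) (Fin 2) ℂ) = !![ε ^ 3, 0; 0, ε ^ 2])
    (hT : (T : Matrix (Fin 2) (Fin 2) ℂ) =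
      (ε ^ 2 - ε ^ 3)⁻¹ • !![ε + ε ^ 4, 1; 1, -(ε + ε ^ 4)])
    (hU : (U : Matrix (Fin 2) (Fin 2) ℂ) = !![0, 1; -1, 0])
    (φ : Vd 7 →ₗ[ℂ] Vd 1)
    (hφS : ∀ f, φ (actV (↑S) 7 f) = actV (↑S) 1 (φ f))
    (hφT : ∀ f, φ (actV (↑T) 7 f) = actV (↑T) 1 (φ f))
    (hφU : ∀ f, φ (actV (↑U) 7 f) = actV (↑U) 1 (φ f)) :
    φ = 0 := by
  have p0_7 : (0:ℕ) + 7 = 7 := by norm_num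
  have p1_6 : (1:ℕ) + 6 = 7 := by norm_num
  have p2_5 : (2:ℕ) + 5 = 7 := by norm_num
  have p3_4 : (3:ℕ) + 4 = 7 := by norm_num
  have p4_3 : (4:ℕ) + 3 = 7 := by norm_num
  have p5_2 : (5:ℕ) + 2 = 7 := by norm_num
  have p6_1 : (6:ℕ) + 1 = 7 := by norm_num
  have p7_0 : (7:ℕ) + 0 = 7 := by norm_num
  have hS0 := S_step ε hε (↑S) hS φ hφS 0 7 p0_7
  have hS1 := S_step ε hε (↑S) hS φ hφS 1 6 p1_6
  have hS2 := S_step ε hε (↑S) hS φ hφS 2 5 p2_5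
  have hS3 := S_step ε hε (↑S) hS φ hφS 3 4 p3_4
  have hS4 := S_step ε hε (↑S) hS φ hφS 4 3 p4_3
  have hS5 := S_step ε hε (↑S) hS φ hφS 5 2 p5_2
  have hS6 := S_step ε hε (↑S) hS φ hφS 6 1 p6_1
  have hS7 := S_step ε hε (↑S) hS φ hφS 7 0 p7_0
  have hz0 : φ (monV 7 0 7 p0_7) = 0 := vd1_zero _ (hS0.1 (by norm_num)) (hS0.2 (by norm_num))
  have hz1 : φ (monV 7 1 6 p1_6) = 0 := vd1_zero _ (hS1.1 (by norm_num)) (hS1.2 (by norm_num))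
  have hz2 : φ (monV 7 2 5 p2_5) = 0 := vd1_zero _ (hS2.1 (by norm_num)) (hS2.2 (by norm_num))
  have hz5 : φ (monV 7 5 2 p5_2) = 0 := vd1_zero _ (hS5.1 (by norm_num)) (hS5.2 (by norm_num))
  have hz6 : φ (monV 7 6 1 p6_1) = 0 := vd1_zero _ (hS6.1 (by norm_num)) (hS6.2 (by norm_num))
  have hz7 : φ (monV 7 7 0 p7_0) = 0 := vd1_zero _ (hS7.1 (by norm_num)) (hS7.2 (by norm_num))
  have he4 : coeff (Finsupp.single 1 1) ((φ (monV 7 4 3 p4_3) : Vd 1) : MvPolynomial (Fin 2) ℂ) = 0 := hS4.2 (by norm_num)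
  have hval4 := rep1 (φ (monV 7 4 3 p4_3))
  rw [he4] at hval4
  have hcz3 : coeff (Finsupp.single 0 1) ((φ (monV 7 3 4 p3_4) : Vd 1) : MvPolynomial (Fin 2) ℂ) = 0 := hS3.1 (by norm_num)
  have hval3 := rep1 (φ (monV 7 3 4 p3_4))
  rw [hcz3] at hval3
  have hU4 := (U_step (↑U) hU φ hφU 4 3 p4_3 p3_4).2
  have hactT4 : actV (↑T) 7 (monV 7 4 3 p4_3) = ((ε^2-ε^3)⁻¹)^7 •
      ((((-1)*ε^3 + (-3)*ε^6 + (-3)*ε^9 + (-1)*ε^12 : ℂ)) • monV 7 0 7 p0_7 + (((3)*ε^2 + (-4)*ε^4 + (6)*ε^5 + (-16)*ε^7 + (3)*ε^8 + (-24)*ε^10 + (-16)*ε^13 + (-4)*ε^16 : ℂ)) • monV 7 1 6 p1_6 + (((-3)*ε + (12)*ε^3 + (-3)*ε^4 + (-6)*ε^5 + (36)*ε^6 + (-30)*ε^8 + (36)*ε^9 + (-60)*ε^11 + (12)*ε^12 + (-60)*ε^14 + (-30)*ε^17 + (-6)*ε^20 : ℂ)) • monV 7 2 5 p2_5 + (((1)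 + (-12)*ε^2 + (18)*ε^4 + (-24)*ε^5 + (-4)*ε^6 + (72)*ε^7 + (-12)*ε^8 + (-24)*ε^9 + (108)*ε^10 + (-60)*ε^12 + (72)*ε^13 + (-80)*ε^15 + (18)*ε^16 + (-60)*ε^18 + (-24)*ε^21 + (-4)*ε^24 : ℂ)) • monV 7 3 4 p3_4 + (((4)*ε + (-18)*ε^3 + (4)*ε^4 + (12)*ε^5 + (-54)*ε^6 + (-1)*ε^7 + (60)*ε^8 + (-54)*ε^9 + (-7)*ε^10 + (120)*ε^11 + (-18)*ε^12 + (-21)*ε^13 + (120)*ε^14 + (-35)*ε^16 + (60)*ε^17 + (-35)*ε^19 + (12)*ε^20 + (-21)*ε^22 + (-7)*ε^25 + (-1)*ε^28 : ℂ)) • monV 7 4 3 p4_3 + (((6)*ε^2 + (-12)*ε^4 + (12)*ε^5 + (3)*ε^6 + (-48)*ε^7 + (6)*ε^8 + (18)*ε^9 + (-72)*ε^10 + (45)*ε^12 + (-48)*ε^13 + (60)*ε^15 + (-12)*ε^16 + (45)*ε^18 + (18)*ε^21 + (3)*ε^24 : ℂ)) • monV 7 5 2 p5_2 + (((4)*ε^3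 + (-3)*ε^5 + (12)*ε^6 + (-15)*ε^8 + (12)*ε^9 + (-30)*ε^11 + (4)*ε^12 + (-30)*ε^14 + (-15)*ε^17 + (-3)*ε^20 : ℂ)) • monV 7 6 1 p6_1 + (((1)*ε^4 + (4)*ε^7 + (6)*ε^10 + (4)*ε^13 + (1)*ε^16 : ℂ)) • monV 7 7 0 p7_0) := by
    apply Subtype.ext
    rw [actV_coe, monV_coe, subst_mon, hT]
    simp only [SetLike.val_smul, Submodule.coe_add, monV_coe, smul_eq_C_mul,
      Matrix.smul_apply, Matrix.cons_val', Matrix.cons_val_zero, Matrix.cons_val_one,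
      Matrix.head_cons, Matrix.empty_val', Matrix.cons_val_fin_one, Matrix.head_fin_const,
      Matrix.of_apply, smul_eq_mul]
    simp only [_root_.map_mul, _root_.map_add, map_sub, map_pow, map_neg, _root_.map_one,
      map_ofNat]
    ring
  have hT4 := hφT (monV 7 4 3 p4_3)
  rw [hactT4, LinearMap.map_smul] at hT4
  simp only [map_add, LinearMap.map_smul] at hT4
  rw [hz0, hz1, hz2, hz5, hz6, hz7] at hT4
  have hco4 := congrArg (fun v : Vd 1 => ((v : Vd 1) : MvPolynomial (Fin 2) ℂ)) hT4
  simp only [SetLike.val_smul, Submodule.coe_add, ZeroMemClass.coe_zero, smul_zero,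
    zero_add, add_zero] at hco4
  rw [actV_coe, hval3, hval4, subst_lin, hT] at hco4
  simp only [Matrix.smul_apply, Matrix.cons_val', Matrix.cons_val_zero, Matrix.cons_val_one,
    Matrix.head_cons, Matrix.empty_val', Matrix.cons_val_fin_one, Matrix.head_fin_const,
    Matrix.of_apply, smul_eq_mul] at hco4
  have hraw4 := congrArg (coeff (Finsupp.single 0 1)) hco4
  simp only [coeff_smul, coeff_add, coeff0X0, coeff0X1, coeff1X0, coeff1X1, smul_eq_mul] at hraw4
  have hMM4 : ((ε^2-ε^3)⁻¹)^7 * ((((4)*ε + (-18)*ε^3 + (4)*ε^4 + (12)*ε^5 + (-54)*ε^6 + (-1)*ε^7 + (60)*ε^8 + (-54)*ε^9 + (-7)*ε^10 + (120)*ε^11 + (-18)*ε^12 + (-21)*ε^13 + (120)*ε^14 + (-35)*ε^16 + (60)*ε^17 + (-35)*ε^19 + (12)*ε^20 + (-21)*ε^22 + (-7)*ε^25 + (-1)*ε^28 : ℂ)) * (coeff (Finsupp.single 0 1) ((φ (monV 7 4 3 p4_3) : Vd 1) : MvPolynomial (Fin 2) ℂ))) = (ε^2-ε^3)⁻¹ *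 ((ε+ε^4) * (coeff (Finsupp.single 0 1) ((φ (monV 7 4 3 p4_3) : Vd 1) : MvPolynomial (Fin 2) ℂ))) := by
    linear_combination hraw4
  have hE4 : ((((4)*ε + (-18)*ε^3 + (4)*ε^4 + (12)*ε^5 + (-54)*ε^6 + (-1)*ε^7 + (60)*ε^8 + (-54)*ε^9 + (-7)*ε^10 + (120)*ε^11 + (-18)*ε^12 + (-21)*ε^13 + (120)*ε^14 + (-35)*ε^16 + (60)*ε^17 + (-35)*ε^19 + (12)*ε^20 + (-21)*ε^22 + (-7)*ε^25 + (-1)*ε^28 : ℂ)) * (coeff (Finsupp.single 0 1) ((φ (monV 7 4 3 p4_3) : Vd 1) : MvPolynomial (Fin 2) ℂ))) = (ε^2-ε^3)^6 * ((ε+ε^4) * (coeff (Finsupp.single 0 1) ((φ (monV 7 4 3 p4_3) : Vd 1) : MvPolynomial (Fin 2) ℂ))) :=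
    clear_inv (ε^2-ε^3) ((ε^2-ε^3)⁻¹) hinv 6 _ _ hMM4
  have hc4 : coeff (Finsupp.single 0 1) ((φ (monV 7 4 3 p4_3) : Vd 1) : MvPolynomial (Fin 2) ℂ) = 0 := by
    linear_combination (((3)/(10)) + ((-1)/(2))*ε^2 + ((-1)/(2))*ε^3) * hE4 + (((1) + ((-11)/(5))*ε + ((6)/(5))*ε^2 + ((37)/(5))*ε^3 + ((-33)/(5))*ε^4 + ((-62)/(5))*ε^5 + ((98)/(5))*ε^6 + ((3)/(10))*ε^7 + ((-399)/(10))*ε^8 + ((211)/(10))*ε^9 + ((61)/(2))*ε^10 + (-45)*ε^11 + ((41)/(5))*ε^12 + ((483)/(10))*ε^13 + ((-144)/(5))*ε^14 + ((9)/(5))*ε^15 + ((273)/(10))*ε^16 + ((-42)/(5))*ε^17 + ((-47)/(10))*ε^18 + ((63)/(10))*ε^19 + ((7)/(5))*ε^20 + ((-89)/(10))*ε^21 + (3)*ε^22 + ((-3)/(10))*ε^23 + ((-16)/(5))*ε^24 + ((1)/(2))*ε^25 + ((-1)/(2))*ε^27) * (coeff (Finsupp.single 0 1) ((φ (monV 7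 4 3 p4_3) : Vd 1) : MvPolynomial (Fin 2) ℂ))) * hΦ
  have hee3 : coeff (Finsupp.single 1 1) ((φ (monV 7 3 4 p3_4) : Vd 1) : MvPolynomial (Fin 2) ℂ) = 0 := by
    linear_combination ((-1:ℂ)^3) * hU4 + ((-1:ℂ)^3) * hc4
  apply conclude
  intro a b hab
  have ha : a ≤ 7 := by omega
  interval_cases a
  · have hb : b = 7 := by omega
    subst hb
    exact hz0
  · have hb : b = 6 := by omega
    subst hb
    exact hz1
  · have hb : b = 5 := by omega
    subst hb
    exact hz2
  · have hb : b = 4 := by omega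
    subst hb
    exact vd1_zero _ hcz3 hee3
  · have hb : b = 3 := by omega
    subst hb
    exact vd1_zero _ hc4 he4
  · have hb : b = 2 := by omega
    subst hb
    exact hz5
  · have hb : b = 1 := by omega
    subst hb
    exact hz6
  · have hb : b = 0 := by omega
    subst hb
    exact hz7

set_option maxHeartbeats 4000000 in
lemma case9 (ε : ℂ) (hε : IsPrimitiveRoot ε 5)
    (hΦ : ε^4 + ε^3 + ε^2 + ε + 1 = 0)
    (hinv : (ε^2 - ε^3) * (ε^2 - ε^3)⁻¹ = 1)
    (S T U : GL (Fin 2) ℂ)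
    (hS : (S : Matrix (Fin 2) (Fin 2) ℂ) = !![ε ^ 3, 0; 0, ε ^ 2])
    (hT : (T : Matrix (Fin 2) (Fin 2) ℂ) =
      (ε ^ 2 - ε ^ 3)⁻¹ • !![ε + ε ^ 4, 1; 1, -(ε + ε ^ 4)])
    (hU : (U : Matrix (Fin 2) (Fin 2) ℂ) = !![0, 1; -1, 0])
    (φ : Vd 9 →ₗ[ℂ] Vd 1)
    (hφS : ∀ f, φ (actV (↑S) 9 f) = actV (↑S) 1 (φ f))
    (hφT : ∀ f, φ (actV (↑T) 9 f) = actV (↑T) 1 (φ f))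
    (hφU : ∀ f, φ (actV (↑U) 9 f) = actV (↑U) 1 (φ f)) :
    φ = 0 := by
  have p0_9 : (0:ℕ) + 9 = 9 := by norm_num
  have p1_8 : (1:ℕ) + 8 = 9 := by norm_num
  have p2_7 : (2:ℕ) + 7 = 9 := by norm_num
  have p3_6 : (3:ℕ) + 6 = 9 := by norm_num
  have p4_5 : (4:ℕ) + 5 = 9 := by norm_num
  have p5_4 : (5:ℕ) + 4 = 9 := by norm_num
  have p6_3 : (6:ℕ) + 3 = 9 := by norm_num
  have p7_2 : (7:ℕ) + 2 = 9 := by norm_num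
  have p8_1 : (8:ℕ) + 1 = 9 := by norm_num
  have p9_0 : (9:ℕ) + 0 = 9 := by norm_num
  have hS0 := S_step ε hε (↑S) hS φ hφS 0 9 p0_9
  have hS1 := S_step ε hε (↑S) hS φ hφS 1 8 p1_8
  have hS2 := S_step ε hε (↑S) hS φ hφS 2 7 p2_7
  have hS3 := S_step ε hε (↑S) hS φ hφS 3 6 p3_6
  have hS4 := S_step ε hε (↑S) hS φ hφS 4 5 p4_5
  have hS5 := S_step ε hε (↑S) hS φ hφS 5 4 p5_4
  have hS6 := S_step ε hε (↑S) hS φ hφS 6 3 p6_3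
  have hS7 := S_step ε hε (↑S) hS φ hφS 7 2 p7_2
  have hS8 := S_step ε hε (↑S) hS φ hφS 8 1 p8_1
  have hS9 := S_step ε hε (↑S) hS φ hφS 9 0 p9_0
  have hz1 : φ (monV 9 1 8 p1_8) = 0 := vd1_zero _ (hS1.1 (by norm_num)) (hS1.2 (by norm_num))
  have hz2 : φ (monV 9 2 7 p2_7) = 0 := vd1_zero _ (hS2.1 (by norm_num)) (hS2.2 (by norm_num))
  have hz3 : φ (monV 9 3 6 p3_6) = 0 := vd1_zero _ (hS3.1 (by norm_num)) (hS3.2 (by norm_num))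
  have hz6 : φ (monV 9 6 3 p6_3) = 0 := vd1_zero _ (hS6.1 (by norm_num)) (hS6.2 (by norm_num))
  have hz7 : φ (monV 9 7 2 p7_2) = 0 := vd1_zero _ (hS7.1 (by norm_num)) (hS7.2 (by norm_num))
  have hz8 : φ (monV 9 8 1 p8_1) = 0 := vd1_zero _ (hS8.1 (by norm_num)) (hS8.2 (by norm_num))
  have he0 : coeff (Finsupp.single 1 1) ((φ (monV 9 0 9 p0_9) : Vd 1) : MvPolynomial (Fin 2) ℂ) = 0 := hS0.2 (by norm_num)
  have hval0 := rep1 (φ (monV 9 0 9 p0_9))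
  rw [he0] at hval0
  have he5 : coeff (Finsupp.single 1 1) ((φ (monV 9 5 4 p5_4) : Vd 1) : MvPolynomial (Fin 2) ℂ) = 0 := hS5.2 (by norm_num)
  have hval5 := rep1 (φ (monV 9 5 4 p5_4))
  rw [he5] at hval5
  have hcz4 : coeff (Finsupp.single 0 1) ((φ (monV 9 4 5 p4_5) : Vd 1) : MvPolynomial (Fin 2) ℂ) = 0 := hS4.1 (by norm_num)
  have hval4 := rep1 (φ (monV 9 4 5 p4_5))
  rw [hcz4] at hval4
  have hcz9 : coeff (Finsupp.single 0 1) ((φ (monV 9 9 0 p9_0) : Vd 1) : MvPolynomial (Fin 2) ℂ) = 0 := hS9.1 (by norm_num)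
  have hval9 := rep1 (φ (monV 9 9 0 p9_0))
  rw [hcz9] at hval9
  have hU0 := (U_step (↑U) hU φ hφU 0 9 p0_9 p9_0).2
  have hU5 := (U_step (↑U) hU φ hφU 5 4 p5_4 p4_5).2
  have hactT0 : actV (↑T) 9 (monV 9 0 9 p0_9) = ((ε^2-ε^3)⁻¹)^9 •
      ((((-1)*ε^9 + (-9)*ε^12 + (-36)*ε^15 + (-84)*ε^18 + (-126)*ε^21 + (-126)*ε^24 + (-84)*ε^27 + (-36)*ε^30 + (-9)*ε^33 + (-1)*ε^36 : ℂ)) • monV 9 0 9 p0_9 + (((9)*ε^8 + (72)*ε^11 + (252)*ε^14 + (504)*ε^17 + (630)*ε^20 + (504)*ε^23 + (252)*ε^26 + (72)*ε^29 + (9)*ε^32 : ℂ)) • monV 9 1 8 p1_8 + (((-36)*ε^7 + (-252)*ε^10 + (-756)*ε^13 + (-1260)*ε^16 + (-1260)*ε^19 + (-756)*ε^22 + (-252)*ε^25 + (-36)*ε^28 : ℂ)) • monV 9 2 7 p2_7 + (((84)*ε^6 + (504)*ε^9 + (1260)*ε^12 + (1680)*ε^15 + (1260)*ε^18 + (504)*ε^21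 + (84)*ε^24 : ℂ)) • monV 9 3 6 p3_6 + (((-126)*ε^5 + (-630)*ε^8 + (-1260)*ε^11 + (-1260)*ε^14 + (-630)*ε^17 + (-126)*ε^20 : ℂ)) • monV 9 4 5 p4_5 + (((126)*ε^4 + (504)*ε^7 + (756)*ε^10 + (504)*ε^13 + (126)*ε^16 : ℂ)) • monV 9 5 4 p5_4 + (((-84)*ε^3 + (-252)*ε^6 + (-252)*ε^9 + (-84)*ε^12 : ℂ)) • monV 9 6 3 p6_3 + (((36)*ε^2 + (72)*ε^5 + (36)*ε^8 : ℂ)) • monV 9 7 2 p7_2 + (((-9)*ε + (-9)*ε^4 : ℂ)) • monV 9 8 1 p8_1 + (((1) : ℂ)) • monV 9 9 0 p9_0) := by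
    apply Subtype.ext
    rw [actV_coe, monV_coe, subst_mon, hT]
    simp only [SetLike.val_smul, Submodule.coe_add, monV_coe, smul_eq_C_mul,
      Matrix.smul_apply, Matrix.cons_val', Matrix.cons_val_zero, Matrix.cons_val_one,
      Matrix.head_cons, Matrix.empty_val', Matrix.cons_val_fin_one, Matrix.head_fin_const,
      Matrix.of_apply, smul_eq_mul]
    simp only [_root_.map_mul, _root_.map_add, map_sub, map_pow, map_neg, _root_.map_one,
      map_ofNat]
    ring
  have hT0 := hφT (monV 9 0 9 p0_9)
  rw [hactT0, LinearMap.map_smul] at hT0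
  simp only [map_add, LinearMap.map_smul] at hT0
  rw [hz1, hz2, hz3, hz6, hz7, hz8] at hT0
  have hco0 := congrArg (fun v : Vd 1 => ((v : Vd 1) : MvPolynomial (Fin 2) ℂ)) hT0
  simp only [SetLike.val_smul, Submodule.coe_add, ZeroMemClass.coe_zero, smul_zero,
    zero_add, add_zero] at hco0
  rw [actV_coe, hval0, hval4, hval5, hval9, subst_lin, hT] at hco0
  simp only [Matrix.smul_apply, Matrix.cons_val', Matrix.cons_val_zero, Matrix.cons_val_one,
    Matrix.head_cons, Matrix.empty_val', Matrix.cons_val_fin_one, Matrix.head_fin_const,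
    Matrix.of_apply, smul_eq_mul] at hco0
  have hraw0 := congrArg (coeff (Finsupp.single 0 1)) hco0
  simp only [coeff_smul, coeff_add, coeff0X0, coeff0X1, coeff1X0, coeff1X1, smul_eq_mul] at hraw0
  have hMM0 : ((ε^2-ε^3)⁻¹)^9 * ((((-1)*ε^9 + (-9)*ε^12 + (-36)*ε^15 + (-84)*ε^18 + (-126)*ε^21 + (-126)*ε^24 + (-84)*ε^27 + (-36)*ε^30 + (-9)*ε^33 + (-1)*ε^36 : ℂ)) * (coeff (Finsupp.single 0 1) ((φ (monV 9 0 9 p0_9) : Vd 1) : MvPolynomial (Fin 2) ℂ)) + (((126)*ε^4 + (504)*ε^7 + (756)*ε^10 + (504)*ε^13 + (126)*ε^16 : ℂ)) * (coeff (Finsupp.single 0 1) ((φ (monV 9 5 4 p5_4) : Vd 1) : MvPolynomial (Fin 2) ℂ))) = (ε^2-ε^3)⁻¹ * ((ε+ε^4) * (coeff (Finsupp.single 0 1) ((φ (monV 9 0 9 p0_9) : Vd 1) : MvPolynomial (Fin 2) ℂ))) := by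
    linear_combination hraw0
  have hE0 : ((((-1)*ε^9 + (-9)*ε^12 + (-36)*ε^15 + (-84)*ε^18 + (-126)*ε^21 + (-126)*ε^24 + (-84)*ε^27 + (-36)*ε^30 + (-9)*ε^33 + (-1)*ε^36 : ℂ)) * (coeff (Finsupp.single 0 1) ((φ (monV 9 0 9 p0_9) : Vd 1) : MvPolynomial (Fin 2) ℂ)) + (((126)*ε^4 + (504)*ε^7 + (756)*ε^10 + (504)*ε^13 + (126)*ε^16 : ℂ)) * (coeff (Finsupp.single 0 1) ((φ (monV 9 5 4 p5_4) : Vd 1) : MvPolynomial (Fin 2) ℂ))) = (ε^2-ε^3)^8 * ((ε+ε^4) * (coeff (Finsupp.single 0 1) ((φ (monV 9 0 9 p0_9) : Vd 1) : MvPolynomial (Fin 2) ℂ))) :=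
    clear_inv (ε^2-ε^3) ((ε^2-ε^3)⁻¹) hinv 8 _ _ hMM0
  have hactT5 : actV (↑T) 9 (monV 9 5 4 p5_4) = ((ε^2-ε^3)⁻¹)^9 •
      ((((1)*ε^4 + (4)*ε^7 + (6)*ε^10 + (4)*ε^13 + (1)*ε^16 : ℂ)) • monV 9 0 9 p0_9 + (((-4)*ε^3 + (5)*ε^5 + (-12)*ε^6 + (25)*ε^8 + (-12)*ε^9 + (50)*ε^11 + (-4)*ε^12 + (50)*ε^14 + (25)*ε^17 + (5)*ε^20 : ℂ)) • monV 9 1 8 p1_8 + (((6)*ε^2 + (-20)*ε^4 + (12)*ε^5 + (10)*ε^6 + (-80)*ε^7 + (6)*ε^8 + (60)*ε^9 + (-120)*ε^10 + (150)*ε^12 + (-80)*ε^13 + (200)*ε^15 + (-20)*ε^16 + (150)*ε^18 + (60)*ε^21 + (10)*ε^24 : ℂ)) • monV 9 2 7 p2_7 + (((-4)*ε + (30)*ε^3 + (-4)*ε^4 + (-40)*ε^5 + (90)*ε^6 + (10)*ε^7 + (-200)*ε^8 + (90)*ε^9 + (70)*ε^10 + (-400)*ε^11 + (30)*ε^12 +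 (210)*ε^13 + (-400)*ε^14 + (350)*ε^16 + (-200)*ε^17 + (350)*ε^19 + (-40)*ε^20 + (210)*ε^22 + (70)*ε^25 + (10)*ε^28 : ℂ)) • monV 9 3 6 p3_6 + (((1) + (-20)*ε^2 + (60)*ε^4 + (-40)*ε^5 + (-40)*ε^6 + (240)*ε^7 + (-15)*ε^8 + (-240)*ε^9 + (360)*ε^10 + (40)*ε^11 + (-600)*ε^12 + (240)*ε^13 + (140)*ε^14 + (-800)*ε^15 + (60)*ε^16 + (280)*ε^17 + (-600)*ε^18 + (350)*ε^20 + (-240)*ε^21 + (280)*ε^23 + (-40)*ε^24 + (140)*ε^26 + (40)*ε^29 + (5)*ε^32 : ℂ)) • monV 9 4 5 p4_5 + (((5)*ε + (-40)*ε^3 + (5)*ε^4 + (60)*ε^5 + (-120)*ε^6 + (-20)*ε^7 + (300)*ε^8 + (-119)*ε^9 + (-140)*ε^10 + (600)*ε^11 + (-31)*ε^12 + (-420)*ε^13 + (600)*ε^14 + (36)*ε^15 + (-700)*ε^16 + (300)*ε^17 + (84)*ε^18 + (-700)*ε^19 + (60)*ε^20 + (126)*ε^21 + (-420)*ε^22 +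 (126)*ε^24 + (-140)*ε^25 + (84)*ε^27 + (-20)*ε^28 + (36)*ε^30 + (9)*ε^33 + (1)*ε^36 : ℂ)) • monV 9 5 4 p5_4 + (((10)*ε^2 + (-40)*ε^4 + (20)*ε^5 + (30)*ε^6 + (-160)*ε^7 + (6)*ε^8 + (180)*ε^9 + (-240)*ε^10 + (-32)*ε^11 + (450)*ε^12 + (-160)*ε^13 + (-112)*ε^14 + (600)*ε^15 + (-40)*ε^16 + (-224)*ε^17 + (450)*ε^18 + (-280)*ε^20 + (180)*ε^21 + (-224)*ε^23 + (30)*ε^24 + (-112)*ε^26 + (-32)*ε^29 + (-4)*ε^32 : ℂ)) • monV 9 6 3 p6_3 + (((10)*ε^3 + (-20)*ε^5 + (30)*ε^6 + (6)*ε^7 + (-100)*ε^8 + (30)*ε^9 + (42)*ε^10 + (-200)*ε^11 + (10)*ε^12 + (126)*ε^13 + (-200)*ε^14 + (210)*ε^16 + (-100)*ε^17 + (210)*ε^19 + (-20)*ε^20 + (126)*ε^22 + (42)*ε^25 + (6)*ε^28 : ℂ)) • monV 9 7 2 p7_2 + (((5)*ε^4 + (-4)*ε^6 + (20)*ε^7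 + (-24)*ε^9 + (30)*ε^10 + (-60)*ε^12 + (20)*ε^13 + (-80)*ε^15 + (5)*ε^16 + (-60)*ε^18 + (-24)*ε^21 + (-4)*ε^24 : ℂ)) • monV 9 8 1 p8_1 + (((1)*ε^5 + (5)*ε^8 + (10)*ε^11 + (10)*ε^14 + (5)*ε^17 + (1)*ε^20 : ℂ)) • monV 9 9 0 p9_0) := by
    apply Subtype.ext
    rw [actV_coe, monV_coe, subst_mon, hT]
    simp only [SetLike.val_smul, Submodule.coe_add, monV_coe, smul_eq_C_mul,
      Matrix.smul_apply, Matrix.cons_val', Matrix.cons_val_zero, Matrix.cons_val_one,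
      Matrix.head_cons, Matrix.empty_val', Matrix.cons_val_fin_one, Matrix.head_fin_const,
      Matrix.of_apply, smul_eq_mul]
    simp only [_root_.map_mul, _root_.map_add, map_sub, map_pow, map_neg, _root_.map_one,
      map_ofNat]
    ring
  have hT5 := hφT (monV 9 5 4 p5_4)
  rw [hactT5, LinearMap.map_smul] at hT5
  simp only [map_add, LinearMap.map_smul] at hT5
  rw [hz1, hz2, hz3, hz6, hz7, hz8] at hT5
  have hco5 := congrArg (fun v : Vd 1 => ((v : Vd 1) : MvPolynomial (Fin 2) ℂ)) hT5
  simp only [SetLike.val_smul, Submodule.coe_add, ZeroMemClass.coe_zero, smul_zero,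
    zero_add, add_zero] at hco5
  rw [actV_coe, hval0, hval4, hval5, hval9, subst_lin, hT] at hco5
  simp only [Matrix.smul_apply, Matrix.cons_val', Matrix.cons_val_zero, Matrix.cons_val_one,
    Matrix.head_cons, Matrix.empty_val', Matrix.cons_val_fin_one, Matrix.head_fin_const,
    Matrix.of_apply, smul_eq_mul] at hco5
  have hraw5 := congrArg (coeff (Finsupp.single 0 1)) hco5
  simp only [coeff_smul, coeff_add, coeff0X0, coeff0X1, coeff1X0, coeff1X1, smul_eq_mul] at hraw5
  have hMM5 : ((ε^2-ε^3)⁻¹)^9 * ((((1)*ε^4 + (4)*ε^7 + (6)*ε^10 + (4)*ε^13 + (1)*ε^16 : ℂ)) * (coeff (Finsupp.single 0 1) ((φ (monV 9 0 9 p0_9) : Vd 1) : MvPolynomial (Fin 2) ℂ)) + (((5)*ε + (-40)*ε^3 + (5)*ε^4 + (60)*ε^5 + (-120)*ε^6 + (-20)*ε^7 + (300)*ε^8 + (-119)*ε^9 + (-140)*ε^10 + (600)*ε^11 + (-31)*ε^12 + (-420)*ε^13 + (600)*ε^14 + (36)*ε^15 + (-700)*ε^16 + (300)*ε^17 + (84)*ε^18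 + (-700)*ε^19 + (60)*ε^20 + (126)*ε^21 + (-420)*ε^22 + (126)*ε^24 + (-140)*ε^25 + (84)*ε^27 + (-20)*ε^28 + (36)*ε^30 + (9)*ε^33 + (1)*ε^36 : ℂ)) * (coeff (Finsupp.single 0 1) ((φ (monV 9 5 4 p5_4) : Vd 1) : MvPolynomial (Fin 2) ℂ))) = (ε^2-ε^3)⁻¹ * ((ε+ε^4) * (coeff (Finsupp.single 0 1) ((φ (monV 9 5 4 p5_4) : Vd 1) : MvPolynomial (Fin 2) ℂ))) := by
    linear_combination hraw5
  have hE5 : ((((1)*ε^4 + (4)*ε^7 + (6)*ε^10 + (4)*ε^13 + (1)*ε^16 : ℂ)) * (coeff (Finsupp.single 0 1) ((φ (monV 9 0 9 p0_9) : Vd 1) : MvPolynomial (Fin 2) ℂ)) + (((5)*ε + (-40)*ε^3 + (5)*ε^4 + (60)*ε^5 + (-120)*ε^6 + (-20)*ε^7 + (300)*ε^8 + (-119)*ε^9 + (-140)*ε^10 + (600)*ε^11 + (-31)*ε^12 + (-420)*ε^13 + (600)*ε^14 + (36)*ε^15 + (-700)*ε^16 + (300)*ε^17 + (84)*ε^18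 + (-700)*ε^19 + (60)*ε^20 + (126)*ε^21 + (-420)*ε^22 + (126)*ε^24 + (-140)*ε^25 + (84)*ε^27 + (-20)*ε^28 + (36)*ε^30 + (9)*ε^33 + (1)*ε^36 : ℂ)) * (coeff (Finsupp.single 0 1) ((φ (monV 9 5 4 p5_4) : Vd 1) : MvPolynomial (Fin 2) ℂ))) = (ε^2-ε^3)^8 * ((ε+ε^4) * (coeff (Finsupp.single 0 1) ((φ (monV 9 5 4 p5_4) : Vd 1) : MvPolynomial (Fin 2) ℂ))) :=
    clear_inv (ε^2-ε^3) ((ε^2-ε^3)⁻¹) hinv 8 _ _ hMM5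
  have hc0 : coeff (Finsupp.single 0 1) ((φ (monV 9 0 9 p0_9) : Vd 1) : MvPolynomial (Fin 2) ℂ) = 0 := by
    linear_combination (((-13)/(75)) + ((107)/(375))*ε^2 + ((107)/(375))*ε^3) * hE0 + (((-21)/(25)) + ((168)/(125))*ε^2 + ((168)/(125))*ε^3) * hE5 + (((1) + (-1)*ε + ((21)/(25))*ε^4 + ((4)/(25))*ε^5 + ((-293)/(125))*ε^6 + ((84)/(25))*ε^7 + ((-252)/(125))*ε^8 + ((-1766)/(375))*ε^9 + ((403)/(75))*ε^10 + ((-646)/(375))*ε^11 + ((-783)/(125))*ε^12 + ((982)/(375))*ε^13 + ((961)/(375))*ε^14 + ((-2341)/(375))*ε^15 + ((1046)/(375))*ε^16 + ((3139)/(375))*ε^17 + ((-4397)/(375))*ε^18 + ((112)/(125))*ε^19 + ((2338)/(75))*ε^20 + ((-2372)/(75))*ε^21 + ((1054)/(125))*ε^22 + ((4241)/(125))*ε^23 + ((-721)/(25))*ε^24 + ((4373)/(375))*ε^25 + ((5857)/(375))*ε^26 + ((-949)/(125))*ε^27 + ((478)/(375))*ε^28 + ((1089)/(125))*ε^29 +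 ((-856)/(375))*ε^30 + ((13)/(75))*ε^31 + ((898)/(375))*ε^32 + ((-107)/(375))*ε^33 + ((107)/(375))*ε^35) * (coeff (Finsupp.single 0 1) ((φ (monV 9 0 9 p0_9) : Vd 1) : MvPolynomial (Fin 2) ℂ)) + (((21)/(5))*ε + ((-21)/(5))*ε^2 + ((-1008)/(25))*ε^3 + ((1491)/(25))*ε^4 + ((2121)/(25))*ε^5 + ((-23709)/(125))*ε^6 + ((819)/(25))*ε^7 + ((43134)/(125))*ε^8 + ((-41076)/(125))*ε^9 + ((-9156)/(25))*ε^10 + ((72219)/(125))*ε^11 + ((-15204)/(125))*ε^12 + ((-107583)/(125))*ε^13 + ((63756)/(125))*ε^14 + ((48384)/(125))*ε^15 + ((-108339)/(125))*ε^16 + ((28329)/(125))*ε^17 + ((84588)/(125))*ε^18 + ((-66528)/(125))*ε^19 + ((8337)/(125))*ε^20 + ((58842)/(125))*ε^21 + ((-4683)/(25))*ε^22 + ((-4368)/(125))*ε^23 + ((22428)/(125))*ε^24 + ((-252)/(25))*ε^25 + ((-11781)/(125))*ε^26 + ((8169)/(125))*ε^27 + ((-777)/(125))*ε^28 + ((-5103)/(125))*ε^29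 + ((1344)/(125))*ε^30 + ((-21)/(25))*ε^31 + ((-1407)/(125))*ε^32 + ((168)/(125))*ε^33 + ((-168)/(125))*ε^35) * (coeff (Finsupp.single 0 1) ((φ (monV 9 5 4 p5_4) : Vd 1) : MvPolynomial (Fin 2) ℂ))) * hΦ
  have hc5 : coeff (Finsupp.single 0 1) ((φ (monV 9 5 4 p5_4) : Vd 1) : MvPolynomial (Fin 2) ℂ) = 0 := by
    linear_combination (((-1)/(150)) + ((4)/(375))*ε^2 + ((4)/(375))*ε^3) * hE0 + (((-1)/(10)) + ((21)/(125))*ε^2 + ((21)/(125))*ε^3) * hE5 + ((((1)/(10))*ε^4 + ((-1)/(10))*ε^5 + ((-21)/(125))*ε^6 + ((2)/(5))*ε^7 + ((-29)/(125))*ε^8 + ((-217)/(375))*ε^9 + ((38)/(75))*ε^10 + ((-32)/(375))*ε^11 + ((-167)/(250))*ε^12 + ((163)/(750))*ε^13 + ((47)/(375))*ε^14 + ((-152)/(375))*ε^15 + ((119)/(750))*ε^16 + ((211)/(750))*ε^17 + ((-169)/(375))*ε^18 + ((9)/(125))*ε^19 + ((169)/(150))*ε^20 + ((-88)/(75))*ε^21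 + ((81)/(250))*ε^22 + ((157)/(125))*ε^23 + ((-27)/(25))*ε^24 + ((166)/(375))*ε^25 + ((433)/(750))*ε^26 + ((-71)/(250))*ε^27 + ((37)/(750))*ε^28 + ((81)/(250))*ε^29 + ((-32)/(375))*ε^30 + ((1)/(150))*ε^31 + ((67)/(750))*ε^32 + ((-4)/(375))*ε^33 + ((4)/(375))*ε^35) * (coeff (Finsupp.single 0 1) ((φ (monV 9 0 9 p0_9) : Vd 1) : MvPolynomial (Fin 2) ℂ)) + ((1) + ((-1)/(2))*ε + ((-1)/(2))*ε^2 + ((-121)/(25))*ε^3 + ((267)/(50))*ε^4 + ((661)/(50))*ε^5 + ((-5171)/(250))*ε^6 + ((-197)/(50))*ε^7 + ((5768)/(125))*ε^8 + ((-3562)/(125))*ε^9 + ((-272)/(5))*ε^10 + ((17571)/(250))*ε^11 + ((-148)/(125))*ε^12 + ((-27547)/(250))*ε^13 + ((7487)/(125))*ε^14 + ((6898)/(125))*ε^15 + ((-27121)/(250))*ε^16 + ((6661)/(250))*ε^17 + ((10771)/(125))*ε^18 + ((-8286)/(125))*ε^19 + ((1943)/(250))*ε^20 + ((7369)/(125))*ε^21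 + ((-1141)/(50))*ε^22 + ((-611)/(125))*ε^23 + ((2811)/(125))*ε^24 + ((-27)/(25))*ε^25 + ((-2989)/(250))*ε^26 + ((2041)/(250))*ε^27 + ((-183)/(250))*ε^28 + ((-1287)/(250))*ε^29 + ((168)/(125))*ε^30 + ((-1)/(10))*ε^31 + ((-353)/(250))*ε^32 + ((21)/(125))*ε^33 + ((-21)/(125))*ε^35) * (coeff (Finsupp.single 0 1) ((φ (monV 9 5 4 p5_4) : Vd 1) : MvPolynomial (Fin 2) ℂ))) * hΦ
  have hee9 : coeff (Finsupp.single 1 1) ((φ (monV 9 9 0 p9_0) : Vd 1) : MvPolynomial (Fin 2) ℂ) = 0 := by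
    linear_combination ((-1:ℂ)^9) * hU0 + ((-1:ℂ)^9) * hc0
  have hee4 : coeff (Finsupp.single 1 1) ((φ (monV 9 4 5 p4_5) : Vd 1) : MvPolynomial (Fin 2) ℂ) = 0 := by
    linear_combination ((-1:ℂ)^4) * hU5 + ((-1:ℂ)^4) * hc5
  apply conclude
  intro a b hab
  have ha : a ≤ 9 := by omega
  interval_cases a
  · have hb : b = 9 := by omega
    subst hb
    exact vd1_zero _ hc0 he0
  · have hb : b = 8 := by omega
    subst hb
    exact hz1
  · have hb : b = 7 := by omega
    subst hb
    exact hz2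
  · have hb : b = 6 := by omega
    subst hb
    exact hz3
  · have hb : b = 5 := by omega
    subst hb
    exact vd1_zero _ hcz4 hee4
  · have hb : b = 4 := by omega
    subst hb
    exact vd1_zero _ hc5 he5
  · have hb : b = 3 := by omega
    subst hb
    exact hz6
  · have hb : b = 2 := by omega
    subst hb
    exact hz7
  · have hb : b = 1 := by omega
    subst hb
    exact hz8
  · have hb : b = 0 := by omega
    subst hb
    exact vd1_zero _ hcz9 hee9



theorem stmt1 (ε : ℂ) (hε : IsPrimitiveRoot ε 5)
    (S T U : GL (Fin 2) ℂ)
    (hS : (S : Matrix (Fin 2) (Fin 2) ℂ) = !![ε ^ 3, 0; 0, ε ^ 2])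
    (hT : (T : Matrix (Fin 2) (Fin 2) ℂ) =
      (ε ^ 2 - ε ^ 3)⁻¹ • !![ε + ε ^ 4, 1; 1, -(ε + ε ^ 4)])
    (hU : (U : Matrix (Fin 2) (Fin 2) ℂ) = !![0, 1; -1, 0])
    (Gicosa : Subgroup (GL (Fin 2) ℂ)) (hG : Gicosa = Subgroup.closure {S, T, U})
    (k : ℕ) (hk2 : 2 ≤ k) (hk5 : k ≤ 5)
    (φ : Vd (2 * k - 1) →ₗ[ℂ] Vd 1)
    (hequiv : ∀ g ∈ Gicosa, ∀ f : Vd (2 * k - 1),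
      φ (actV (↑g) (2 * k - 1) f) = actV (↑g) 1 (φ f)) :
    φ = 0 := by
  subst hG
  have hΦ : ε^4 + ε^3 + ε^2 + ε + 1 = 0 := by
    have h := hε.geom_sum_eq_zero (by norm_num)
    rw [Finset.sum_range_succ, Finset.sum_range_succ, Finset.sum_range_succ,
      Finset.sum_range_succ, Finset.sum_range_one] at h
    linear_combination h
  have hδ : ε ^ 2 - ε ^ 3 ≠ 0 := by
    intro h
    have h23 : ε ^ 2 = ε ^ 3 := by linear_combination h
    have h2 := hε.pow_inj (by norm_num) (by norm_num) h23
    norm_num at h2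
  have hinv : (ε ^ 2 - ε ^ 3) * (ε ^ 2 - ε ^ 3)⁻¹ = 1 := mul_inv_cancel₀ hδ
  have hSG : S ∈ Subgroup.closure ({S, T, U} : Set (GL (Fin 2) ℂ)) :=
    Subgroup.subset_closure (by simp)
  have hTG : T ∈ Subgroup.closure ({S, T, U} : Set (GL (Fin 2) ℂ)) :=
    Subgroup.subset_closure (by simp)
  have hUG : U ∈ Subgroup.closure ({S, T, U} : Set (GL (Fin 2) ℂ)) :=
    Subgroup.subset_closure (by simp)
  have hφS := hequiv S hSG
  have hφT := hequiv T hTG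
  have hφU := hequiv U hUG
  interval_cases k
  · exact case3 ε hε hΦ hinv S T U hS hT hU φ hφS hφT hφU
  · exact case5 ε hε hΦ hinv S T U hS hT hU φ hφS hφT hφU
  · exact case7 ε hε hΦ hinv S T U hS hT hU φ hφS hφT hφU
  · exact case9 ε hε hΦ hinv S T U hS hT hU φ hφS hφT hφU
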